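/- arXiv:0905.1438 — 3 statements merged into one kernel-verified Lean document; each statement's English description precedes it below -/
import Mathlib

section
/- For distinct positive integers n and m, \int_0^1 \frac{e_n(t) e_m(t)}{1-t}\, dt = 0, where e_n is the identity-type polynomial; the integrand extends continuously to [0,1] since (1-t) divides both e_n and e_m. -/
open Polynomial MeasureTheory

/-- Falling factorial `c(c-1)⋯(c-m+1)` for real `c`. -/
noncomputable def fallFac (c : ℝ) (m : ℕ) : ℝ := ∏ i ∈ Finset.range m, (c - i)

/-- The identity-type polynomial `e_n(t) = ∑_{m=0}^n ((n)_m (-n)_m / (m!)^2) t^m`. -/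
noncomputable def idPoly (n : ℕ) : Polynomial ℝ :=
  ∑ m ∈ Finset.range (n + 1),
    Polynomial.C (fallFac (n : ℝ) m * fallFac (-(n : ℝ)) m / ((Nat.factorial m : ℝ)) ^ 2) *
      Polynomial.X ^ m

lemma fallFac_zero (c : ℝ) : fallFac c 0 = 1 := by simp [fallFac]

lemma fallFac_succ (c : ℝ) (m : ℕ) : fallFac c (m + 1) = fallFac c m * (c - m) :=
  Finset.prod_range_succ _ _

lemma fallFac_nat (n : ℕ) : ∀ m, fallFac (n : ℝ) m = (n.descFactorial m : ℝ) := by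
  intro m
  induction m with
  | zero => simp [fallFac_zero]
  | succ m ih =>
    rw [fallFac_succ, ih]
    rcases le_or_gt m n with h | h
    · rw [Nat.descFactorial_succ, Nat.cast_mul, Nat.cast_sub h]
      ring
    · rw [Nat.descFactorial_eq_zero_iff_lt.2 h,
        Nat.descFactorial_eq_zero_iff_lt.2 (h.trans (Nat.lt_succ_self m))]
      simp

lemma fallFac_neg_nat (n : ℕ) : ∀ m, fallFac (-(n : ℝ)) m = (-1) ^ m * (n.ascFactorial m : ℝ) := by
  intro m
  induction m with
  | zero => simp [fallFac_zero]
  | succ m ih =>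
    rw [fallFac_succ, ih, Nat.ascFactorial_succ]
    push_cast
    ring

lemma descFac_mul_factorial {a b : ℕ} (h : b ≤ a) :
    a.descFactorial b * (a - b).factorial = a.factorial := by
  rw [Nat.descFactorial_eq_factorial_mul_choose, mul_comm b.factorial,
    Nat.choose_mul_factorial_mul_factorial h]

lemma nat_key_aux (k j : ℕ) :
    (k + j + 2).factorial * (k + j + 2).descFactorial (k + 1) * (k + j + 2).ascFactorial (k + 1)
      = ((k + 1).factorial) ^ 2 *
        ((2 * k + j + 3).descFactorial (k + j + 2) * (k + j + 1).choose (k + 1)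
          + (2 * k + j + 2).descFactorial (k + j + 2) * (k + j + 1).choose k) := by
  set a : ℝ := ((k + j + 1).factorial : ℝ) with ha
  set b : ℝ := ((2 * k + j + 2).factorial : ℝ) with hb
  set c : ℝ := (k.factorial : ℝ) with hc
  set e : ℝ := (j.factorial : ℝ) with he
  have hc0 : c ≠ 0 := Nat.cast_ne_zero.2 (Nat.factorial_ne_zero _)
  have he0 : e ≠ 0 := Nat.cast_ne_zero.2 (Nat.factorial_ne_zero _)
  have ha0 : a ≠ 0 := Nat.cast_ne_zero.2 (Nat.factorial_ne_zero _)
  have g1 : ((k + j + 2).factorial : ℝ) = (k + j + 2) * a := by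
    rw [show k + j + 2 = (k + j + 1) + 1 by omega, Nat.factorial_succ]
    push_cast [ha]; ring
  have g2 : ((2 * k + j + 3).factorial : ℝ) = (2 * k + j + 3) * b := by
    rw [show 2 * k + j + 3 = (2 * k + j + 2) + 1 by omega, Nat.factorial_succ]
    push_cast [hb]; ring
  have g3 : ((k + 1).factorial : ℝ) = (k + 1) * c := by
    rw [Nat.factorial_succ]; push_cast [hc]; ring
  have g4 : ((j + 1).factorial : ℝ) = (j + 1) * e := by
    rw [Nat.factorial_succ]; push_cast [he]; ring
  have f1 : ((k + j + 2).descFactorial (k + 1) : ℝ) = ((k + j + 2) * a) / ((j + 1) * e) := by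
    rw [eq_div_iff (by positivity)]
    have t := descFac_mul_factorial (a := k + j + 2) (b := k + 1) (by omega)
    rw [show k + j + 2 - (k + 1) = j + 1 by omega] at t
    have tR := congrArg (Nat.cast : ℕ → ℝ) t
    push_cast at tR
    linear_combination tR - ((k + j + 2).descFactorial (k + 1) : ℝ) * g4 + g1
  have f2 : ((k + j + 2).ascFactorial (k + 1) : ℝ) = b / a := by
    rw [eq_div_iff ha0]
    have t := Nat.factorial_mul_ascFactorial (k + j + 1) (k + 1)
    rw [show k + j + 1 + 1 = k + j + 2 by omega,
      show k + j + 1 + (k + 1) = 2 * k + j + 2 by omega] at t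
    have tR := congrArg (Nat.cast : ℕ → ℝ) t
    push_cast at tR
    linear_combination tR
  have f3 : ((2 * k + j + 3).descFactorial (k + j + 2) : ℝ)
      = ((2 * k + j + 3) * b) / ((k + 1) * c) := by
    rw [eq_div_iff (by positivity)]
    have t := descFac_mul_factorial (a := 2 * k + j + 3) (b := k + j + 2) (by omega)
    rw [show 2 * k + j + 3 - (k + j + 2) = k + 1 by omega] at t
    have tR := congrArg (Nat.cast : ℕ → ℝ) t
    push_cast at tR
    linear_combination tR - ((2 * k + j + 3).descFactorial (k + j + 2) : ℝ) * g3 + g2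
  have f4 : ((2 * k + j + 2).descFactorial (k + j + 2) : ℝ) = b / c := by
    rw [eq_div_iff hc0]
    have t := descFac_mul_factorial (a := 2 * k + j + 2) (b := k + j + 2) (by omega)
    rw [show 2 * k + j + 2 - (k + j + 2) = k by omega] at t
    have tR := congrArg (Nat.cast : ℕ → ℝ) t
    push_cast at tR
    linear_combination tR
  have f5 : ((k + j + 1).choose (k + 1) : ℝ) = a / ((k + 1) * c * e) := by
    rw [eq_div_iff (by positivity)]
    have t := Nat.choose_mul_factorial_mul_factorial (n := k + j + 1) (k := k + 1) (by omega)
    rw [show k + j + 1 - (k + 1) = j by omega] at t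
    have tR := congrArg (Nat.cast : ℕ → ℝ) t
    push_cast at tR
    linear_combination tR - (((k + j + 1).choose (k + 1) : ℝ) * e) * g3
  have f6 : ((k + j + 1).choose k : ℝ) = a / (c * ((j + 1) * e)) := by
    rw [eq_div_iff (by positivity)]
    have t := Nat.choose_mul_factorial_mul_factorial (n := k + j + 1) (k := k) (by omega)
    rw [show k + j + 1 - k = j + 1 by omega] at t
    have tR := congrArg (Nat.cast : ℕ → ℝ) t
    push_cast at tR
    linear_combination tR - (((k + j + 1).choose k : ℝ) * c) * g4
  have goalR : ((k + j + 2).factorial : ℝ) * ((k + j + 2).descFactorial (k + 1) : ℝ)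
      * ((k + j + 2).ascFactorial (k + 1) : ℝ)
      = (((k + 1).factorial : ℝ)) ^ 2 *
        (((2 * k + j + 3).descFactorial (k + j + 2) : ℝ) * ((k + j + 1).choose (k + 1) : ℝ)
          + ((2 * k + j + 2).descFactorial (k + j + 2) : ℝ) * ((k + j + 1).choose k : ℝ)) := by
    rw [f1, f2, f3, f4, f5, f6, g1, g3]
    field_simp
    ring
  exact_mod_cast goalR

lemma nat_key (N k : ℕ) :
    (N + 1).factorial * (N + 1).descFactorial (k + 1) * (N + 1).ascFactorial (k + 1)
      = ((k + 1).factorial) ^ 2 *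
        ((N + k + 2).descFactorial (N + 1) * N.choose (k + 1)
          + (N + k + 1).descFactorial (N + 1) * N.choose k) := by
  rcases lt_trichotomy (k + 1) (N + 1) with h | h | h
  · obtain ⟨j, rfl⟩ : ∃ j, N = k + 1 + j := ⟨N - (k + 1), by omega⟩
    have := nat_key_aux k j
    rw [show k + j + 2 = k + 1 + j + 1 by omega, show 2 * k + j + 3 = k + 1 + j + k + 2 by omega,
      show 2 * k + j + 2 = k + 1 + j + k + 1 by omega,
      show k + j + 1 = k + 1 + j by omega] at this
    exact this
  · obtain rfl : N = k := by omega
    have h2 : N.choose (N + 1) = 0 := Nat.choose_eq_zero_of_lt (by omega)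
    rw [h2, Nat.choose_self, Nat.descFactorial_self]
    have t1 := Nat.factorial_mul_ascFactorial N (N + 1)
    have t2 := descFac_mul_factorial (a := N + N + 1) (b := N + 1) (by omega)
    rw [show N + N + 1 - (N + 1) = N by omega] at t2
    have had : (N + 1).ascFactorial (N + 1) = (N + N + 1).descFactorial (N + 1) := by
      apply Nat.eq_of_mul_eq_mul_left (Nat.factorial_pos N)
      rw [show N + (N + 1) = N + N + 1 by omega] at t1
      rw [t1, ← t2, Nat.mul_comm]
    rw [had]
    ring
  · have h1 : (N + 1).descFactorial (k + 1) = 0 := Nat.descFactorial_eq_zero_iff_lt.2 (by omega)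
    have h2 : N.choose (k + 1) = 0 := Nat.choose_eq_zero_of_lt (by omega)
    have h3 : N.choose k = 0 := Nat.choose_eq_zero_of_lt (by omega)
    simp [h1, h2, h3]
    omega

/-- `FF N = X^(N+1) * (1-X)^N`. -/
noncomputable def FF (N : ℕ) : Polynomial ℝ := X ^ (N + 1) * (1 - X) ^ N

/-- `GG N` is the `(N+1)`-st derivative of `FF N`. -/
noncomputable def GG (N : ℕ) : Polynomial ℝ := derivative^[N + 1] (FF N)

lemma coeff_one_sub_X_pow (e k : ℕ) :
    ((1 - X : Polynomial ℝ) ^ e).coeff k = (-1) ^ k * (e.choose k : ℝ) := by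
  have h1 : (1 - X : Polynomial ℝ) = (-1 : ℝ) • (X + C (-1)) := by
    rw [neg_smul, one_smul, neg_add, C_neg, neg_neg, C_1]
    ring
  rw [h1, _root_.smul_pow, coeff_smul, coeff_X_add_C_pow]
  rcases le_or_gt k e with h | h
  · have : e - k + (e + k) = 2 * e := by omega
    have h2 : ((-1 : ℝ)) ^ e * ((-1) ^ (e - k)) = (-1) ^ k := by
      rw [← pow_add]
      have h3 : e + (e - k) = 2 * (e - k) + k := by omega
      rw [h3, pow_add, pow_mul]
      norm_num
    simp only [smul_eq_mul]
    rw [← mul_assoc, h2]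
  · rw [Nat.choose_eq_zero_of_lt h]
    simp

lemma coeff_GG (N k : ℕ) :
    (GG N).coeff k = ((k + N + 1).descFactorial (N + 1) : ℝ) * ((-1) ^ k * (N.choose k : ℝ)) := by
  rw [GG, Polynomial.coeff_iterate_derivative, FF, coeff_X_pow_mul, coeff_one_sub_X_pow]
  rw [show k + (N + 1) = k + N + 1 by omega]
  rw [nsmul_eq_mul]

lemma coeff_idPoly (n m : ℕ) :
    (idPoly n).coeff m
      = (-1) ^ m * (n.descFactorial m : ℝ) * (n.ascFactorial m : ℝ) / ((m.factorial : ℝ)) ^ 2 := by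
  rw [idPoly, finset_sum_coeff]
  simp only [coeff_C_mul, coeff_X_pow, mul_ite, mul_one, mul_zero]
  rw [Finset.sum_ite_eq (Finset.range (n + 1)) m]
  split_ifs with h
  · rw [fallFac_nat, fallFac_neg_nat]
    ring
  · rw [Nat.descFactorial_eq_zero_iff_lt.2 (by simp at h; omega)]
    simp

lemma key (N : ℕ) :
    C (((N + 1).factorial : ℝ)) * idPoly (N + 1) = (1 - X) * GG N := by
  ext m
  rw [coeff_C_mul, coeff_idPoly, sub_mul, one_mul, coeff_sub]
  cases m with
  | zero =>
    rw [mul_coeff_zero, coeff_X_zero, zero_mul, coeff_GG, show 0 + N + 1 = N + 1 by omega,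
      Nat.descFactorial_self, Nat.descFactorial_zero, Nat.ascFactorial_zero,
      Nat.choose_zero_right]
    norm_num
  | succ k =>
    rw [coeff_X_mul, coeff_GG, coeff_GG,
      show k + 1 + N + 1 = N + k + 2 by omega, show k + N + 1 = N + k + 1 by omega]
    have hkey := congrArg (Nat.cast : ℕ → ℝ) (nat_key N k)
    push_cast at hkey
    have hf : ((k + 1).factorial : ℝ) ≠ 0 := Nat.cast_ne_zero.2 (Nat.factorial_ne_zero _)
    rw [mul_div_assoc', div_eq_iff (pow_ne_zero 2 hf)]
    linear_combination ((-1 : ℝ) ^ (k + 1)) * hkey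

lemma natDegree_idPoly_le (n : ℕ) : (idPoly n).natDegree ≤ n := by
  apply Polynomial.natDegree_sum_le_of_forall_le
  intro i hi
  refine le_trans (natDegree_C_mul_le _ _) ?_
  rw [natDegree_X_pow]
  exact Nat.lt_succ_iff.mp (Finset.mem_range.mp hi)

lemma idPoly_eval_one (n : ℕ) (hn : 0 < n) : (idPoly n).eval 1 = 0 := by
  obtain ⟨N, rfl⟩ : ∃ N, n = N + 1 := ⟨n - 1, by omega⟩
  have hfac : (((N + 1).factorial : ℝ)) ≠ 0 := Nat.cast_ne_zero.2 (Nat.factorial_ne_zero _)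
  have h := congrArg (fun p : Polynomial ℝ => p.eval 1) (key N)
  simp only [eval_mul, eval_C, eval_sub, eval_one, eval_X, sub_self, zero_mul] at h
  exact (mul_eq_zero.mp h).resolve_left hfac

lemma FF_eval_zero_iter (N i : ℕ) (hi : i < N + 1) : (derivative^[i] (FF N)).eval 0 = 0 := by
  have hdvd : (X : Polynomial ℝ) ^ (N + 1) ∣ FF N := dvd_mul_right _ _
  have h2 : (X : Polynomial ℝ) ^ (N + 1 - i) ∣ derivative^[i] (FF N) :=
    Polynomial.pow_sub_dvd_iterate_derivative_of_pow_dvd i hdvd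
  have h3 : (X : Polynomial ℝ) ∣ derivative^[i] (FF N) :=
    dvd_trans (dvd_pow_self X (by omega)) h2
  obtain ⟨r, hr⟩ := h3
  rw [hr]
  simp

lemma FF_eval_one_iter (N i : ℕ) (hi : i < N) : (derivative^[i] (FF N)).eval 1 = 0 := by
  have h1 : ((X : Polynomial ℝ) - C 1) ^ N ∣ (1 - X : Polynomial ℝ) ^ N := by
    refine pow_dvd_pow_of_dvd ⟨-1, ?_⟩ N
    rw [C_1]; ring
  have hdvd : ((X : Polynomial ℝ) - C 1) ^ N ∣ FF N := h1.trans (dvd_mul_left _ _)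
  have h2 : ((X : Polynomial ℝ) - C 1) ^ (N - i) ∣ derivative^[i] (FF N) :=
    Polynomial.pow_sub_dvd_iterate_derivative_of_pow_dvd i hdvd
  have h3 : ((X : Polynomial ℝ) - C 1) ∣ derivative^[i] (FF N) :=
    dvd_trans (dvd_pow_self _ (by omega)) h2
  obtain ⟨r, hr⟩ := h3
  rw [hr]
  simp

lemma ibp (u v : Polynomial ℝ) :
    ∫ t in (0:ℝ)..1, (derivative u).eval t * v.eval t
      = u.eval 1 * v.eval 1 - u.eval 0 * v.eval 0
        - ∫ t in (0:ℝ)..1, u.eval t * (derivative v).eval t := by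
  have hsum : (∫ t in (0:ℝ)..1,
      ((derivative u).eval t * v.eval t + u.eval t * (derivative v).eval t))
      = u.eval 1 * v.eval 1 - u.eval 0 * v.eval 0 := by
    have := intervalIntegral.integral_eq_sub_of_hasDerivAt (a := (0:ℝ)) (b := 1)
      (f := fun t => u.eval t * v.eval t)
      (f' := fun t => (derivative u).eval t * v.eval t + u.eval t * (derivative v).eval t)
      (fun x _ => (u.hasDerivAt x).mul (v.hasDerivAt x))
      (Continuous.intervalIntegrable (((derivative u).continuous.mul v.continuous).add
        (u.continuous.mul (derivative v).continuous)) _ _)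
    simpa using this
  have h1 : IntervalIntegrable (fun t => (derivative u).eval t * v.eval t) volume 0 1 :=
    ((derivative u).continuous.mul v.continuous).intervalIntegrable _ _
  have h2 : IntervalIntegrable (fun t => u.eval t * (derivative v).eval t) volume 0 1 :=
    (u.continuous.mul (derivative v).continuous).intervalIntegrable _ _
  rw [intervalIntegral.integral_add h1 h2] at hsum
  linarith

lemma main_int (N : ℕ) (q : Polynomial ℝ) (hq : q.natDegree < N + 1) (hq1 : q.eval 1 = 0) :
    ∫ t in (0:ℝ)..1, (GG N).eval t * q.eval t = 0 := by
  have claim : ∀ d, d ≤ N → (∫ t in (0:ℝ)..1, (GG N).eval t * q.eval t)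
      = (-1) ^ (d + 1) *
        ∫ t in (0:ℝ)..1, (derivative^[N - d] (FF N)).eval t * (derivative^[d + 1] q).eval t := by
    intro d
    induction d with
    | zero =>
      intro _
      have hs := ibp (derivative^[N] (FF N)) q
      have e1 : derivative (derivative^[N] (FF N)) = GG N :=
        (Function.iterate_succ_apply' derivative N (FF N)).symm
      rw [e1, hq1, FF_eval_zero_iter N N (by omega)] at hs
      rw [hs]
      norm_num
    | succ d ih =>
      intro hd
      rw [ih (by omega)]
      have hs := ibp (derivative^[N - (d + 1)] (FF N)) (derivative^[d + 1] q)
      have e1 : derivative (derivative^[N - (d + 1)] (FF N)) = derivative^[N - d] (FF N) := by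
        rw [show N - d = (N - (d + 1)) + 1 by omega, Function.iterate_succ_apply']
      have e2 : derivative (derivative^[d + 1] q) = derivative^[d + 1 + 1] q :=
        (Function.iterate_succ_apply' derivative (d + 1) q).symm
      rw [e1, e2, FF_eval_zero_iter N (N - (d + 1)) (by omega),
        FF_eval_one_iter N (N - (d + 1)) (by omega)] at hs
      rw [hs]
      ring
  have final := claim N le_rfl
  rw [final, Polynomial.iterate_derivative_eq_zero (show q.natDegree < N + 1 from hq)]
  simp

lemma aux_orth (n m : ℕ) (hm : 0 < m) (h : m < n) :
    ∫ t in (0:ℝ)..1, (idPoly n).eval t * (idPoly m).eval t / (1 - t) = 0 := by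
  obtain ⟨N, rfl⟩ : ∃ N, n = N + 1 := ⟨n - 1, by omega⟩
  have hfac : (((N + 1).factorial : ℝ)) ≠ 0 := Nat.cast_ne_zero.2 (Nat.factorial_ne_zero _)
  have hcongr : (∫ t in (0:ℝ)..1, (idPoly (N + 1)).eval t * (idPoly m).eval t / (1 - t))
      = ∫ t in (0:ℝ)..1, (((N + 1).factorial : ℝ))⁻¹ * ((GG N).eval t * (idPoly m).eval t) := by
    apply intervalIntegral.integral_congr_ae
    have h1 : ∀ᵐ (t : ℝ) ∂volume, t ≠ (1 : ℝ) := by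
      rw [MeasureTheory.ae_iff]
      simp only [not_not, Set.setOf_eq_eq_singleton]
      exact measure_singleton 1
    filter_upwards [h1] with t ht _
    have hev := congrArg (fun p : Polynomial ℝ => p.eval t) (key N)
    simp only [eval_mul, eval_C, eval_sub, eval_one, eval_X] at hev
    have h1t : (1 : ℝ) - t ≠ 0 := sub_ne_zero.2 (Ne.symm ht)
    field_simp
    linear_combination (idPoly m).eval t * hev
  rw [hcongr, intervalIntegral.integral_const_mul,
    main_int N (idPoly m) (lt_of_le_of_lt (natDegree_idPoly_le m) (by omega))
      (idPoly_eval_one m hm)]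
  simp

theorem idPoly_orthogonal (n m : ℕ) (hn : 0 < n) (hm : 0 < m) (hnm : n ≠ m) :
    ∫ t in (0:ℝ)..1, (idPoly n).eval t * (idPoly m).eval t / (1 - t) = 0 := by
  rcases hnm.lt_or_gt with h | h
  · rw [intervalIntegral.integral_congr
      (g := fun t => (idPoly m).eval t * (idPoly n).eval t / (1 - t)) (fun x _ => by ring)]
    exact aux_orth m n hn h
  · exact aux_orth n m hm h
end

section
/- For every positive integer n, \int_0^1 \frac{e_n(t)^2}{1-t}\, dt = \frac{1}{2n}, where e_n is the identity-type polynomial. -/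
open Polynomial MeasureTheory

lemma fallFac_natCast (n m : ℕ) (h : m ≤ n) : fallFac (n : ℝ) m = (n.descFactorial m : ℝ) := by
  induction m with
  | zero => simp [fallFac]
  | succ k ih =>
    rw [fallFac, Finset.prod_range_succ, ← fallFac, ih (le_of_lt h),
      Nat.descFactorial_succ, Nat.cast_mul, Nat.cast_sub (by omega)]
    ring

lemma fallFac_neg_natCast (n m : ℕ) : fallFac (-(n : ℝ)) m = (-1) ^ m * (n.ascFactorial m : ℝ) := by
  induction m with
  | zero => simp [fallFac]
  | succ k ih =>
    rw [fallFac, Finset.prod_range_succ, ← fallFac, ih, Nat.ascFactorial_succ, Nat.cast_mul]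
    push_cast
    ring

lemma pow_sub_dvd_iterate_derivative (a : ℝ) {p : Polynomial ℝ} {k : ℕ}
    (h : (X - C a) ^ k ∣ p) (j : ℕ) : (X - C a) ^ (k - j) ∣ derivative^[j] p := by
  induction j generalizing p k with
  | zero => simpa using h
  | succ i ih =>
    rw [Function.iterate_succ_apply]
    have h1 : (X - C a) ^ (k - 1) ∣ derivative p := by
      obtain ⟨q, rfl⟩ := h
      rcases Nat.eq_zero_or_pos k with hk | hk
      · simp [hk]
      · obtain ⟨j, rfl⟩ : ∃ j, k = j + 1 := ⟨k - 1, by omega⟩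
        refine ⟨C ((j : ℝ) + 1) * q + (X - C a) * derivative q, ?_⟩
        rw [derivative_mul, derivative_pow]
        simp only [derivative_sub, derivative_X, derivative_C, sub_zero, mul_one,
          Nat.add_sub_cancel, Nat.cast_add, Nat.cast_one, pow_succ]
        ring
    have := ih h1
    rwa [show k - 1 - i = k - (i + 1) by omega] at this

lemma iterate_derivative_eq_C {p : Polynomial ℝ} {d : ℕ} (h : p.natDegree ≤ d) :
    derivative^[d] p = C ((d.factorial : ℝ) * p.coeff d) := by
  induction d generalizing p with
  | zero =>
    simpa using (Polynomial.eq_C_of_natDegree_le_zero h)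
  | succ k ih =>
    rw [Function.iterate_succ_apply, ih (by
      have := p.natDegree_derivative_le
      omega), coeff_derivative]
    rw [Nat.factorial_succ]
    push_cast
    ring_nf

lemma beta_nat (b a : ℕ) :
    ∫ t in (0:ℝ)..1, t ^ a * (1 - t) ^ b
      = (a.factorial : ℝ) * b.factorial / (a + b + 1).factorial := by
  induction b generalizing a with
  | zero =>
    simp only [pow_zero, mul_one, integral_pow, Nat.factorial_zero, Nat.cast_one, one_pow,
      Nat.add_zero]
    rw [Nat.factorial_succ]
    push_cast
    field_simp
    simp
  | succ b ih =>
    have hu : ∀ t ∈ Set.uIcc (0:ℝ) 1, HasDerivAt (fun t : ℝ => (1 - t) ^ (b + 1))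
        (((b : ℝ) + 1) * (1 - t) ^ b * (-1)) t := by
      intro t _
      have h1 : HasDerivAt (fun t : ℝ => 1 - t) (-1) t := (hasDerivAt_id t).const_sub 1
      simpa using h1.fun_pow (b + 1)
    have hv : ∀ t ∈ Set.uIcc (0:ℝ) 1, HasDerivAt (fun t : ℝ => t ^ (a + 1) / ((a : ℝ) + 1))
        (t ^ a) t := by
      intro t _
      have := (hasDerivAt_pow (a + 1) t).div_const ((a : ℝ) + 1)
      simpa [mul_div_assoc, mul_div_cancel_left₀, Nat.cast_add_one_ne_zero a] using this
    have hcont1 : IntervalIntegrable (fun t : ℝ => ((b : ℝ) + 1) * (1 - t) ^ b * (-1))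
        volume 0 1 := (Continuous.intervalIntegrable (by continuity) _ _)
    have hcont2 : IntervalIntegrable (fun t : ℝ => t ^ a) volume 0 1 :=
      (Continuous.intervalIntegrable (by continuity) _ _)
    have key := intervalIntegral.integral_mul_deriv_eq_deriv_mul hu hv hcont1 hcont2
    have lhs_eq : ∫ t in (0:ℝ)..1, (1 - t) ^ (b + 1) * t ^ a
        = ∫ t in (0:ℝ)..1, t ^ a * (1 - t) ^ (b + 1) := by
      apply intervalIntegral.integral_congr; intro t _; ring
    rw [lhs_eq] at key
    have rhs_eq : ∫ t in (0:ℝ)..1, ((b : ℝ) + 1) * (1 - t) ^ b * (-1) * (t ^ (a + 1) / ((a : ℝ) + 1))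
        = (-((b : ℝ) + 1) / ((a : ℝ) + 1)) * ∫ t in (0:ℝ)..1, t ^ (a + 1) * (1 - t) ^ b := by
      rw [← intervalIntegral.integral_const_mul]
      apply intervalIntegral.integral_congr; intro t _
      field_simp
    rw [rhs_eq, ih (a + 1)] at key
    rw [key]
    have h2 : ((a + 1 + b + 1).factorial : ℝ) = ((a + (b + 1) + 1).factorial : ℝ) := by
      norm_num; ring_nf
    rw [h2]
    have h3 : ((a + (b+1) + 1).factorial : ℝ) ≠ 0 := Nat.cast_ne_zero.2 (Nat.factorial_ne_zero _)
    have h4 : ((a:ℝ) + 1) ≠ 0 := Nat.cast_add_one_ne_zero a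
    rw [Nat.factorial_succ (a), Nat.factorial_succ b]
    push_cast
    field_simp
    ring

lemma parts (h : Polynomial ℝ) : ∀ k : ℕ,
    (∀ j < k, (derivative^[j] h).eval 0 = 0 ∧ (derivative^[j] h).eval 1 = 0) →
    ∀ g : Polynomial ℝ,
      ∫ t in (0:ℝ)..1, g.eval t * (derivative^[k] h).eval t
        = (-1) ^ k * ∫ t in (0:ℝ)..1, (derivative^[k] g).eval t * h.eval t := by
  intro k
  induction k with
  | zero => intro _ g; simp
  | succ k ih =>
    intro hvan g
    have hu : ∀ t ∈ Set.uIcc (0:ℝ) 1, HasDerivAt (fun t => g.eval t)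
        ((derivative g).eval t) t := fun t _ => g.hasDerivAt t
    have hv : ∀ t ∈ Set.uIcc (0:ℝ) 1, HasDerivAt (fun t => (derivative^[k] h).eval t)
        ((derivative^[k+1] h).eval t) t := by
      intro t _
      rw [Function.iterate_succ_apply']
      exact (derivative^[k] h).hasDerivAt t
    have hcont1 : IntervalIntegrable (fun t => (derivative g).eval t) volume 0 1 :=
      ((derivative g).continuous.intervalIntegrable _ _)
    have hcont2 : IntervalIntegrable (fun t => (derivative^[k+1] h).eval t) volume 0 1 :=
      ((derivative^[k+1] h).continuous.intervalIntegrable _ _)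
    have key := intervalIntegral.integral_mul_deriv_eq_deriv_mul hu hv hcont1 hcont2
    obtain ⟨hv0, hv1⟩ := hvan k (by omega)
    rw [hv0, hv1, mul_zero, mul_zero, sub_zero, zero_sub] at key
    rw [key, ih (fun j hj => hvan j (by omega)) (derivative g), ← Function.iterate_succ_apply]
    ring

lemma nat_id (m k : ℕ) :
    (m+1).choose k * (k.factorial * k.factorial) * (m + k).descFactorial m
      = m.factorial * ((m+1).descFactorial k * (m+1).ascFactorial k) := by
  have e1 : k.factorial * (m + k).descFactorial m = (m + k).factorial := by
    have := Nat.factorial_mul_descFactorial (show m ≤ m + k by omega)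
    simpa [show m + k - m = k by omega] using this
  have e2 := Nat.descFactorial_eq_factorial_mul_choose (m+1) k
  have e3 : m.factorial * (m+1).ascFactorial k = (m + k).factorial :=
    Nat.factorial_mul_ascFactorial m k
  calc (m+1).choose k * (k.factorial * k.factorial) * (m + k).descFactorial m
      = ((m+1).choose k * k.factorial) * (k.factorial * (m + k).descFactorial m) := by ring
    _ = ((m+1).choose k * k.factorial) * (m.factorial * (m+1).ascFactorial k) := by rw [e1, e3]
    _ = m.factorial * ((k.factorial * (m+1).choose k) * (m+1).ascFactorial k) := by ring
    _ = m.factorial * ((m+1).descFactorial k * (m+1).ascFactorial k) := by rw [← e2]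

set_option maxRecDepth 8000 in
lemma rodrigues (m : ℕ) :
    derivative^[m] (X ^ m * (1 - X) ^ (m+1) : Polynomial ℝ)
      = C (m.factorial : ℝ) * idPoly (m+1) := by
  have expand1 : ((1 : Polynomial ℝ) - X) ^ (m+1)
      = ∑ k ∈ Finset.range (m + 2), C ((-1)^k * ((m+1).choose k : ℝ)) * X ^ k := by
    rw [sub_eq_add_neg, add_comm, add_pow]
    apply Finset.sum_congr rfl
    intro k _
    rw [one_pow, mul_one, map_mul, map_pow, map_neg, map_one, C_eq_natCast]
    rw [neg_pow]
    ring
  have expand : (X ^ m * (1 - X) ^ (m+1) : Polynomial ℝ)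
      = ∑ k ∈ Finset.range (m + 2), C ((-1)^k * ((m+1).choose k : ℝ)) * X ^ (m + k) := by
    rw [expand1, Finset.mul_sum]
    apply Finset.sum_congr rfl
    intro k _
    rw [pow_add]; ring
  rw [expand, iterate_derivative_sum, idPoly, Finset.mul_sum]
  apply Finset.sum_congr rfl
  intro k hk
  have hk' : k ≤ m + 1 := by simpa [Nat.lt_succ_iff] using Finset.mem_range.1 hk
  rw [iterate_derivative_C_mul, iterate_derivative_X_pow_eq_C_mul,
    show m + k - m = k by omega]
  rw [← mul_assoc, ← mul_assoc, ← map_mul, ← map_mul]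
  congr 1
  congr 1
  rw [fallFac_natCast _ _ hk', fallFac_neg_natCast]
  have hfk : ((k.factorial : ℝ)) ≠ 0 := Nat.cast_ne_zero.2 (Nat.factorial_ne_zero _)
  have h := congrArg (Nat.cast : ℕ → ℝ) (nat_id m k)
  push_cast at h
  field_simp
  linear_combination h

theorem idPoly_norm (n : ℕ) (hn : 0 < n) :
    ∫ t in (0:ℝ)..1, ((idPoly n).eval t) ^ 2 / (1 - t) = 1 / (2 * (n : ℝ)) := by
  obtain ⟨m, rfl⟩ := Nat.exists_eq_succ_of_ne_zero hn.ne'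
  set E : Polynomial ℝ := idPoly (m + 1) with hEdef
  set hP : Polynomial ℝ := X ^ m * (1 - X) ^ (m + 1) with hPdef
  have hdvd1 : (X - C (1:ℝ)) ^ (m+1) ∣ hP := by
    refine ⟨X ^ m * (-1) ^ (m+1), ?_⟩
    rw [hPdef]
    have h1 : ((1:Polynomial ℝ) - X) = -(X - C 1) := by rw [map_one]; ring
    rw [h1, neg_pow]
    ring
  have hdvd0 : (X - C (0:ℝ)) ^ m ∣ hP := by
    rw [map_zero, sub_zero]; exact dvd_mul_right _ _
  have hvan1 : ∀ j ≤ m, (derivative^[j] hP).eval 1 = 0 := by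
    intro j hj
    obtain ⟨q, hq⟩ := pow_sub_dvd_iterate_derivative 1 hdvd1 j
    rw [hq, eval_mul, eval_pow, eval_sub, eval_X, eval_C, sub_self,
      zero_pow (by omega), zero_mul]
  have hvan : ∀ j < m, (derivative^[j] hP).eval 0 = 0 ∧ (derivative^[j] hP).eval 1 = 0 := by
    intro j hj
    refine ⟨?_, hvan1 j (by omega)⟩
    obtain ⟨q, hq⟩ := pow_sub_dvd_iterate_derivative 0 hdvd0 j
    rw [hq, eval_mul, eval_pow, eval_sub, eval_X, eval_C, sub_self,
      zero_pow (by omega), zero_mul]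
  have hrod : derivative^[m] hP = C ((m.factorial : ℝ)) * E := rodrigues m
  have hfm : ((m.factorial : ℝ)) ≠ 0 := Nat.cast_ne_zero.2 (Nat.factorial_ne_zero _)
  have hfm1 : (((m+1).factorial : ℝ)) ≠ 0 := Nat.cast_ne_zero.2 (Nat.factorial_ne_zero _)
  have hroot : E.IsRoot 1 := by
    have h0 := hvan1 m le_rfl
    rw [hrod, eval_mul, eval_C, mul_eq_zero] at h0
    exact h0.resolve_left hfm
  set g : Polynomial ℝ := E /ₘ (X - C 1) with hgdef
  have hg : (X - C 1) * g = E := (mul_divByMonic_eq_iff_isRoot).2 hroot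
  have hdegE : E.natDegree ≤ m + 1 := by
    refine Polynomial.natDegree_sum_le_of_forall_le _ _ ?_
    intro k hk
    refine (natDegree_C_mul_le _ _).trans ?_
    rw [natDegree_X_pow]
    exact Nat.lt_succ_iff.1 (Finset.mem_range.1 hk)
  have hdegG : g.natDegree ≤ m := by
    rw [hgdef, natDegree_divByMonic _ (monic_X_sub_C (1:ℝ)), natDegree_X_sub_C]
    omega
  have hcoeffE : E.coeff (m+1)
      = fallFac ((m+1 : ℕ) : ℝ) (m+1) * fallFac (-((m+1 : ℕ) : ℝ)) (m+1)
        / (((m+1).factorial : ℝ)) ^ 2 := by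
    rw [hEdef, idPoly, finset_sum_coeff]
    rw [Finset.sum_eq_single (m+1)]
    · rw [coeff_C_mul, coeff_X_pow, if_pos rfl, mul_one]
    · intro b _ hb
      rw [coeff_C_mul, coeff_X_pow, if_neg (Ne.symm hb), mul_zero]
    · intro hmem
      exact absurd (Finset.self_mem_range_succ (m+1)) hmem
  have hcoeffG : g.coeff m = E.coeff (m+1) := by
    have h1 := congrArg (fun p : Polynomial ℝ => p.coeff (m+1)) hg
    simp only [sub_mul, one_mul, coeff_sub, coeff_X_mul, coeff_C_mul] at h1
    rw [coeff_eq_zero_of_natDegree_lt (by omega : g.natDegree < m + 1)] at h1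
    simpa using h1
  have hpt : ∀ t : ℝ, (E.eval t) ^ 2 / (1 - t) = -(E.eval t * g.eval t) := by
    intro t
    have he : E.eval t = (t - 1) * g.eval t := by
      rw [← hg, eval_mul, eval_sub, eval_X, eval_C]
    by_cases ht : t = 1
    · subst ht; simp [he]
    · have h1t : (1 : ℝ) - t ≠ 0 := sub_ne_zero.2 (Ne.symm ht)
      rw [he]; field_simp; ring
  have hint : (∫ t in (0:ℝ)..1, (E.eval t) ^ 2 / (1 - t))
      = -∫ t in (0:ℝ)..1, E.eval t * g.eval t := by
    rw [← intervalIntegral.integral_neg]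
    apply intervalIntegral.integral_congr
    intro t _
    exact hpt t
  have hparts := parts hP m hvan g
  have l1 : (∫ t in (0:ℝ)..1, g.eval t * (derivative^[m] hP).eval t)
      = (m.factorial : ℝ) * ∫ t in (0:ℝ)..1, E.eval t * g.eval t := by
    rw [← intervalIntegral.integral_const_mul]
    apply intervalIntegral.integral_congr
    intro t _
    simp only [hrod, eval_mul, eval_C]
    ring
  have l2 : (∫ t in (0:ℝ)..1, (derivative^[m] g).eval t * hP.eval t)
      = ((m.factorial : ℝ) * g.coeff m)
        * ((m.factorial : ℝ) * ((m+1).factorial : ℝ) / ((m + (m+1) + 1).factorial : ℝ)) := by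
    rw [iterate_derivative_eq_C hdegG]
    rw [← beta_nat (m+1) m, ← intervalIntegral.integral_const_mul]
    apply intervalIntegral.integral_congr
    intro t _
    simp only [eval_C, hPdef, eval_mul, eval_pow, eval_sub, eval_one, eval_X]
  rw [show m + (m + 1) + 1 = 2 * m + 2 from by omega] at l2
  rw [l1, l2] at hparts
  have hA : (((2*m+1).factorial : ℝ)) ≠ 0 := Nat.cast_ne_zero.2 (Nat.factorial_ne_zero _)
  have hfact : (((2*m+2).factorial : ℝ)) = (2*(m:ℝ)+2) * ((2*m+1).factorial : ℝ) := by
    rw [show 2*m+2 = (2*m+1) + 1 from by omega, Nat.factorial_succ]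
    push_cast; ring
  have hasc : ((m+1).ascFactorial (m+1) : ℝ) = ((2*m+1).factorial : ℝ) / (m.factorial : ℝ) := by
    rw [eq_div_iff hfm]
    have := Nat.factorial_mul_ascFactorial m (m+1)
    rw [show m + (m+1) = 2*m+1 from by omega] at this
    have h2 := congrArg (Nat.cast : ℕ → ℝ) this
    push_cast at h2
    linarith [h2]
  have hsq : ((-1:ℝ))^m * (-1)^m = 1 := by
    rw [← pow_add, Even.neg_one_pow ⟨m, rfl⟩]
  have hfall1 : fallFac ((m+1 : ℕ) : ℝ) (m+1) = (((m+1).factorial : ℝ)) := by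
    rw [fallFac_natCast _ _ le_rfl, Nat.descFactorial_self]
  have hfall2 : fallFac (-((m+1 : ℕ) : ℝ)) (m+1)
      = (-1)^(m+1) * (((m+1).ascFactorial (m+1) : ℝ)) := fallFac_neg_natCast _ _
  have hc : g.coeff m = (-1)^m * (-1) * ((2*m+1).factorial : ℝ)
      / ((m.factorial : ℝ) * (((m+1).factorial : ℝ))) := by
    rw [hcoeffG, hcoeffE, hfall1, hfall2, hasc, pow_succ]
    field_simp
  have hEg : (∫ t in (0:ℝ)..1, E.eval t * g.eval t) = -(1/(2*(m:ℝ)+2)) := by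
    rw [hc, hfact] at hparts
    have h2m2 : (2*(m:ℝ)+2) ≠ 0 := by positivity
    refine mul_left_cancel₀ hfm ?_
    rw [hparts]
    field_simp
    linear_combination (-1:ℝ) * hsq
  rw [hint, hEg]
  push_cast
  field_simp
end

section
/- With e_n(t) = (1-t) e_{n-1}^*(t), for every positive integer n one has \int_0^1 e_{n-1}^*(t)^2 (1-t)\, dt = \frac{1}{2n}. -/
open Polynomial MeasureTheory

/-! ### Auxiliary lemmas -/

lemma fallFac_nat_s7 (n m : ℕ) (h : m ≤ n) :
    fallFac (n : ℝ) m = (Nat.factorial n : ℝ) / (Nat.factorial (n - m)) := by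
  induction m with
  | zero =>
    simp only [fallFac, Finset.range_zero, Finset.prod_empty, Nat.sub_zero]
    rw [eq_div_iff (by positivity)]; ring
  | succ k ih =>
    rw [fallFac, Finset.prod_range_succ, ← fallFac, ih (le_of_lt (Nat.lt_of_succ_le h))]
    have h1 : n - k = (n - (k+1)) + 1 := by omega
    have h2 : ((n - (k+1) + 1 : ℕ) : ℝ) = (n : ℝ) - k := by
      push_cast [Nat.cast_sub (by omega : k+1 ≤ n)]; ring
    rw [h1, Nat.factorial_succ, Nat.cast_mul, h2]
    have h3 : (0:ℝ) < (Nat.factorial (n - (k+1)) : ℝ) := by positivity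
    have h4 : (n : ℝ) - k ≠ 0 := by
      have : (k:ℝ) < n := by exact_mod_cast Nat.lt_of_succ_le h
      intro hc; nlinarith
    field_simp

lemma fallFac_neg (n m : ℕ) (hn : 0 < n) :
    fallFac (-(n : ℝ)) m = (-1)^m * (Nat.factorial (n + m - 1) : ℝ) / (Nat.factorial (n-1)) := by
  induction m with
  | zero =>
    simp only [fallFac, Finset.range_zero, Finset.prod_empty, Nat.add_zero, pow_zero, one_mul]
    rw [eq_div_iff (by positivity)]; ring
  | succ k ih =>
    rw [fallFac, Finset.prod_range_succ, ← fallFac, ih]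
    have h1 : n + (k+1) - 1 = (n + k - 1) + 1 := by omega
    have h2 : ((n + k - 1 + 1 : ℕ) : ℝ) = (n : ℝ) + k := by
      push_cast [Nat.cast_sub (by omega : 1 ≤ n + k)]; ring
    rw [h1, Nat.factorial_succ, Nat.cast_mul, h2]
    have h3 : (0:ℝ) < (Nat.factorial (n-1) : ℝ) := by positivity
    field_simp
    ring

noncomputable def bCoef (n j : ℕ) : ℝ :=
  (-1:ℝ)^j * ((n-1).choose j) * (Nat.factorial (n+j)) / (Nat.factorial j)

noncomputable def rPoly (n : ℕ) : Polynomial ℝ :=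
  ∑ j ∈ Finset.range n, C (bCoef n j) * X ^ j

lemma keyId (n m : ℕ) (hm : 1 ≤ m) (hmn : m ≤ n) :
    (Nat.factorial n : ℝ) * (fallFac (n:ℝ) m * fallFac (-(n:ℝ)) m / ((Nat.factorial m : ℝ))^2)
      = bCoef n m - bCoef n (m-1) := by
  have hn : 0 < n := le_trans hm hmn
  rw [fallFac_nat_s7 n m hmn, fallFac_neg n m hn]
  obtain ⟨k, rfl⟩ : ∃ k, m = k + 1 := ⟨m - 1, by omega⟩
  rcases eq_or_lt_of_le hmn with heq | hlt
  · subst heq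
    unfold bCoef
    have e1 : (k+1) - 1 = k := by omega
    have e2 : (k+1) - (k+1) = 0 := by omega
    have e3 : (k+1) + (k+1) - 1 = 2*k+1 := by omega
    have e4 : (k+1) + k = 2*k+1 := by omega
    have e5 : k.choose (k+1) = 0 := Nat.choose_eq_zero_of_lt (by omega)
    have e6 : k.choose k = 1 := Nat.choose_self k
    rw [e1, e2, e3, e4, e5, e6]
    have hk : (0:ℝ) < (Nat.factorial k : ℝ) := by positivity
    have hk1 : (0:ℝ) < (Nat.factorial (k+1) : ℝ) := by positivity
    have h21 : (0:ℝ) < (Nat.factorial (2*k+1) : ℝ) := by positivity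
    rw [Nat.factorial_succ (k)]
    push_cast
    field_simp
    ring
  · obtain ⟨s, rfl⟩ : ∃ s, n = (k+1) + s + 1 := ⟨n - k - 2, by omega⟩
    unfold bCoef
    have e1 : (k+1) + s + 1 - 1 = k + s + 1 := by omega
    have e2 : (k+1)+s+1 - (k+1) = s + 1 := by omega
    have e3 : (k+1)+s+1 + (k+1) - 1 = 2*k+s+2 := by omega
    have e4 : (k+1)+s+1 + (k+1) = 2*k+s+3 := by omega
    have e5 : (k+1) - 1 = k := by omega
    have e6 : (k+1)+s+1 + k = 2*k+s+2 := by omega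
    rw [e1, e2, e3, e4, e5, e6]
    rw [Nat.cast_choose ℝ (by omega : k+1 ≤ k+s+1), Nat.cast_choose ℝ (by omega : k ≤ k+s+1)]
    have f1 : k+s+1 - (k+1) = s := by omega
    have f2 : k+s+1 - k = s+1 := by omega
    rw [f1, f2]
    have r1 : (Nat.factorial (k+1) : ℝ) = (k+1) * Nat.factorial k := by
      rw [Nat.factorial_succ]; push_cast; ring
    have r2 : (Nat.factorial (s+1) : ℝ) = (s+1) * Nat.factorial s := by
      rw [Nat.factorial_succ]; push_cast; ring
    have r3 : (Nat.factorial (k+1+s+1) : ℝ) = (k+s+2) * Nat.factorial (k+s+1) := by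
      have : k+1+s+1 = (k+s+1)+1 := by omega
      rw [this, Nat.factorial_succ]; push_cast; ring
    have r4 : (Nat.factorial (2*k+s+3) : ℝ) = (2*k+s+3) * Nat.factorial (2*k+s+2) := by
      have : 2*k+s+3 = (2*k+s+2)+1 := by omega
      rw [this, Nat.factorial_succ]; push_cast; ring
    rw [r1, r2, r3, r4]
    have hk : (0:ℝ) < (Nat.factorial k : ℝ) := by positivity
    have hs : (0:ℝ) < (Nat.factorial s : ℝ) := by positivity
    have hks : (0:ℝ) < (Nat.factorial (k+s+1) : ℝ) := by positivity
    have h2k : (0:ℝ) < (Nat.factorial (2*k+s+2) : ℝ) := by positivity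
    field_simp
    ring

lemma bCoef_eq_zero (n j : ℕ) (hn : 0 < n) (h : n ≤ j) : bCoef n j = 0 := by
  unfold bCoef
  rw [Nat.choose_eq_zero_of_lt (by omega)]
  simp

lemma rPoly_coeff (n k : ℕ) (hn : 0 < n) : (rPoly n).coeff k = bCoef n k := by
  unfold rPoly
  rw [finset_sum_coeff]
  simp only [coeff_C_mul, coeff_X_pow]
  by_cases h : k < n
  · rw [Finset.sum_eq_single k (fun b _ hb => by simp [Ne.symm hb])
      (fun hk => absurd (Finset.mem_range.2 h) hk)]
    simp
  · rw [Finset.sum_eq_zero fun b hb => by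
      simp only [Finset.mem_range] at hb
      simp [show k ≠ b by omega]]
    exact (bCoef_eq_zero n k hn (by omega)).symm

lemma idPoly_coeff (n k : ℕ) : (idPoly n).coeff k =
    if k ≤ n then fallFac (n:ℝ) k * fallFac (-(n:ℝ)) k / ((Nat.factorial k : ℝ))^2 else 0 := by
  unfold idPoly
  rw [finset_sum_coeff]
  simp only [coeff_C_mul, coeff_X_pow]
  by_cases h : k ≤ n
  · rw [Finset.sum_eq_single k (fun b _ hb => by simp [Ne.symm hb])
      (fun hk => absurd (Finset.mem_range.2 (by omega)) hk)]
    simp [h]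
  · rw [Finset.sum_eq_zero fun b hb => by
      simp only [Finset.mem_range] at hb
      simp [show k ≠ b by omega]]
    simp [h]

lemma factored (n : ℕ) (hn : 0 < n) :
    (1 - X) * rPoly n = C ((Nat.factorial n : ℝ)) * idPoly n := by
  ext k
  rw [sub_mul, one_mul, coeff_sub, coeff_C_mul, idPoly_coeff, rPoly_coeff n k hn]
  rcases Nat.eq_zero_or_pos k with rfl | hk
  · simp only [mul_coeff_zero, coeff_X_zero, zero_mul, sub_zero, if_pos (Nat.zero_le n)]
    unfold bCoef
    simp [fallFac]
  · obtain ⟨k', rfl⟩ : ∃ k', k = k' + 1 := ⟨k - 1, by omega⟩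
    rw [coeff_X_mul, rPoly_coeff n k' hn]
    by_cases h : k' + 1 ≤ n
    · rw [if_pos h]
      have := keyId n (k'+1) (by omega) h
      rw [show k'+1-1 = k' by omega] at this
      linarith
    · rw [if_neg h, bCoef_eq_zero n (k'+1) hn (by omega), bCoef_eq_zero n k' hn (by omega)]
      ring

noncomputable def fPoly (n : ℕ) : Polynomial ℝ := X ^ n * (1 - X) ^ (n - 1)

lemma fPoly_eq_sum (n : ℕ) (hn : 0 < n) :
    fPoly n = ∑ j ∈ Finset.range n, C ((-1:ℝ)^j * ((n-1).choose j)) * X ^ (n + j) := by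
  unfold fPoly
  rw [sub_eq_add_neg, add_comm, add_pow]
  rw [Finset.mul_sum]
  have hrange : n - 1 + 1 = n := by omega
  rw [hrange]
  apply Finset.sum_congr rfl
  intro j hj
  rw [neg_pow, one_pow, mul_one]
  simp only [map_mul, map_pow, map_neg, map_one, Polynomial.C_eq_natCast]
  ring

lemma cast_descFactorial (n j : ℕ) :
    (((n+j).descFactorial n : ℕ) : ℝ) = (Nat.factorial (n+j) : ℝ) / (Nat.factorial j) := by
  rw [eq_div_iff (by positivity)]
  rw [← Nat.cast_mul, mul_comm]
  norm_cast
  have := Nat.factorial_mul_descFactorial (show n ≤ n + j by omega)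
  rwa [show n + j - n = j by omega] at this

lemma iter_deriv_fPoly (n : ℕ) (hn : 0 < n) :
    derivative^[n] (fPoly n) = rPoly n := by
  rw [fPoly_eq_sum n hn]
  rw [iterate_derivative_sum]
  unfold rPoly
  apply Finset.sum_congr rfl
  intro j hj
  rw [iterate_derivative_C_mul, iterate_derivative_X_pow_eq_smul]
  rw [show n + j - n = j by omega]
  rw [Polynomial.smul_eq_C_mul, ← mul_assoc, ← C_mul]
  congr 1
  rw [cast_descFactorial]
  unfold bCoef
  ring

lemma telescope (g : Polynomial ℝ) (n : ℕ) : ∀ f : Polynomial ℝ,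
    g * derivative^[n] f =
      derivative (∑ i ∈ Finset.range n,
        C ((-1:ℝ)^i) * (derivative^[i] g * derivative^[n-1-i] f))
      + C ((-1:ℝ)^n) * (derivative^[n] g * f) := by
  induction n with
  | zero => simp
  | succ n ih =>
    intro f
    have h1 := ih (derivative f)
    have h2 : ∀ i, i ∈ Finset.range n → C ((-1:ℝ)^i) * (derivative^[i] g * derivative^[n-1-i] (derivative f))
        = C ((-1:ℝ)^i) * (derivative^[i] g * derivative^[n+1-1-i] f) := by
      intro i hi
      simp only [Finset.mem_range] at hi
      rw [← Function.iterate_succ_apply]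
      congr 2
      exact congrArg (fun k => derivative^[k] f) (by omega)
    rw [Finset.sum_congr rfl h2, ← Function.iterate_succ_apply] at h1
    rw [Finset.sum_range_succ, map_add]
    rw [show n+1-1-n = 0 by omega]
    simp only [Function.iterate_zero, id_eq]
    rw [derivative_C_mul, derivative_mul, ← Function.iterate_succ_apply' derivative n g]
    rw [show (n:ℕ).succ = n + 1 from rfl] at h1 ⊢
    rw [pow_succ, map_mul]
    simp only [map_neg, map_one]
    linear_combination h1

lemma dvd_iter_deriv (a : ℝ) (p : Polynomial ℝ) (k j : ℕ) (h : (X - C a)^k ∣ p) (hj : j ≤ k) :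
    (X - C a)^(k-j) ∣ derivative^[j] p := by
  induction j with
  | zero => simpa using h
  | succ j ih =>
    obtain ⟨c, hc⟩ := ih (by omega)
    rw [Function.iterate_succ_apply', hc, derivative_mul, derivative_pow]
    have hkj : k - j = (k - (j+1)) + 1 := by omega
    have hd : derivative (X - C a) = 1 := by simp
    rw [hkj, hd]
    refine ⟨(((k - (j+1) + 1 : ℕ) : Polynomial ℝ)) * c + (X - C a) * derivative c, ?_⟩
    simp only [Nat.add_sub_cancel, Polynomial.C_eq_natCast]
    ring

lemma eval_iter_deriv_zero (a : ℝ) (p : Polynomial ℝ) (k j : ℕ)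
    (h : (X - C a)^k ∣ p) (hj : j < k) : (derivative^[j] p).eval a = 0 := by
  obtain ⟨c, hc⟩ := dvd_iter_deriv a p k j h (le_of_lt hj)
  rw [hc, eval_mul, eval_pow, eval_sub, eval_X, eval_C, sub_self,
    zero_pow (by omega), zero_mul]

lemma hd2 (b : ℕ) (t : ℝ) : HasDerivAt (fun t : ℝ => (1-t)^(b+1)) (-((b+1:ℝ) * (1-t)^b)) t := by
  have hin : HasDerivAt (fun t : ℝ => 1 - t) (-1) t := by
    simpa using (hasDerivAt_id t).const_sub 1
  have h := (hasDerivAt_pow (b+1) (1-t)).comp t hin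
  have heq : (fun x : ℝ => x ^ (b+1)) ∘ (fun t : ℝ => 1 - t) = fun t : ℝ => (1-t)^(b+1) := rfl
  rw [heq] at h
  refine h.congr_deriv ?_
  simp only [Nat.add_sub_cancel]
  push_cast
  ring

lemma contInt (a b : ℕ) (u v : ℝ) : IntervalIntegrable (fun t : ℝ => t^a * (1-t)^b)
    MeasureTheory.volume u v := by
  apply Continuous.intervalIntegrable
  continuity

lemma betaInt (b a : ℕ) :
    ∫ t in (0:ℝ)..1, t^a * (1-t)^b
      = (Nat.factorial a * Nat.factorial b : ℝ) / (Nat.factorial (a+b+1)) := by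
  induction b generalizing a with
  | zero =>
    simp only [pow_zero, mul_one, integral_pow, Nat.factorial_zero, Nat.add_zero]
    rw [Nat.factorial_succ]
    push_cast
    have : (0:ℝ) < Nat.factorial a := by positivity
    field_simp
    simp
  | succ b ih =>
    have key : ∀ t : ℝ, t ∈ Set.uIcc (0:ℝ) 1 → HasDerivAt (fun t : ℝ => t^(a+1) * (1-t)^(b+1))
        ((a+1:ℝ) * (t^a * (1-t)^(b+1)) - (b+1:ℝ) * (t^(a+1) * (1-t)^b)) t := by
      intro t _
      have h1 : HasDerivAt (fun t : ℝ => t^(a+1)) ((a+1:ℝ) * t^a) t := by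
        simpa using hasDerivAt_pow (a+1) t
      have := h1.mul (hd2 b t)
      refine this.congr_deriv ?_
      ring
    have hint : IntervalIntegrable (fun t : ℝ => (a+1:ℝ) * (t^a * (1-t)^(b+1)) - (b+1:ℝ) * (t^(a+1) * (1-t)^b))
        MeasureTheory.volume 0 1 := by
      apply Continuous.intervalIntegrable; continuity
    have hftc := intervalIntegral.integral_eq_sub_of_hasDerivAt key hint
    simp only [one_pow, sub_self, zero_pow (Nat.succ_ne_zero b), zero_pow (Nat.succ_ne_zero a),
      one_mul, mul_zero, zero_mul, mul_one] at hftc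
    rw [intervalIntegral.integral_sub ((contInt a (b+1) 0 1).const_mul _) ((contInt (a+1) b 0 1).const_mul _),
      intervalIntegral.integral_const_mul, intervalIntegral.integral_const_mul, ih (a+1)] at hftc
    rw [sub_eq_zero, show a+1+b+1 = a+(b+1)+1 by omega] at hftc
    have ha : ((a:ℝ)+1) ≠ 0 := by positivity
    apply mul_left_cancel₀ ha
    rw [hftc, Nat.factorial_succ b, Nat.factorial_succ a]
    have hN : (0:ℝ) < ((a+(b+1)+1).factorial : ℝ) := by positivity
    push_cast
    field_simp

lemma polyFTC (p : Polynomial ℝ) :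
    ∫ t in (0:ℝ)..1, (derivative p).eval t = p.eval 1 - p.eval 0 := by
  have h : ∀ x ∈ Set.uIcc (0:ℝ) 1, HasDerivAt (fun t => p.eval t) ((derivative p).eval x) x :=
    fun x _ => p.hasDerivAt x
  exact intervalIntegral.integral_eq_sub_of_hasDerivAt h
    ((p.derivative.continuous_aeval).intervalIntegrable _ _)

lemma iter_deriv_idPoly (n : ℕ) (hn : 0 < n) :
    derivative^[n] (idPoly n)
      = C (fallFac (n:ℝ) n * fallFac (-(n:ℝ)) n / ((Nat.factorial n : ℝ))^2 * (Nat.factorial n)) := by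
  unfold idPoly
  rw [iterate_derivative_sum]
  rw [Finset.sum_range_succ]
  rw [Finset.sum_eq_zero (fun m hm => by
    simp only [Finset.mem_range] at hm
    rw [iterate_derivative_C_mul, iterate_derivative_X_pow_eq_smul,
      Nat.descFactorial_eq_zero_iff_lt.2 hm]
    simp)]
  rw [zero_add, iterate_derivative_C_mul, iterate_derivative_X_pow_eq_smul,
    Nat.descFactorial_self, Nat.sub_self, pow_zero, Polynomial.smul_eq_C_mul]
  rw [mul_one, ← C_mul]

theorem factorPoly_norm (n : ℕ) (hn : 0 < n) (q : Polynomial ℝ)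
    (hq : idPoly n = (1 - Polynomial.X) * q) :
    ∫ t in (0:ℝ)..1, (q.eval t) ^ 2 * (1 - t) = 1 / (2 * (n : ℝ)) := by
  have hfac : (0:ℝ) < (Nat.factorial n : ℝ) := by positivity
  -- q is determined
  have hqr : C ((Nat.factorial n : ℝ)) * q = rPoly n := by
    have h1 : (1 - X) * (C ((Nat.factorial n : ℝ)) * q) = (1 - X) * rPoly n := by
      rw [factored n hn, hq]; ring
    have h1X : (1 - X : Polynomial ℝ) ≠ 0 := by
      intro hc
      have := congrArg (fun p => Polynomial.coeff p 0) hc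
      simp at this
    exact mul_left_cancel₀ h1X h1
  -- divisibility facts about fPoly
  have hXdvd : (X - C (0:ℝ))^n ∣ fPoly n := by
    rw [map_zero, sub_zero]; exact ⟨(1-X)^(n-1), rfl⟩
  have hX1dvd : (X - C (1:ℝ))^(n-1) ∣ fPoly n := by
    refine ⟨X^n * (-1 : Polynomial ℝ)^(n-1), ?_⟩
    unfold fPoly
    rw [map_one]
    rw [show (X - 1 : Polynomial ℝ)^(n-1) * (X^n * (-1:Polynomial ℝ)^(n-1))
        = X^n * ((X - 1) * (-1))^(n-1) by rw [mul_pow]; ring]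
    ring_nf
  -- evaluation of idPoly at 1
  have hid1 : (idPoly n).eval 1 = 0 := by
    rw [hq]; simp
  -- telescope applied
  have htel := telescope (idPoly n) n (fPoly n)
  set S := ∑ i ∈ Finset.range n,
    C ((-1:ℝ)^i) * (derivative^[i] (idPoly n) * derivative^[n-1-i] (fPoly n)) with hS
  -- boundary values of S
  have hS0 : S.eval 0 = 0 := by
    rw [hS, eval_finset_sum]
    apply Finset.sum_eq_zero
    intro i hi
    simp only [Finset.mem_range] at hi
    rw [eval_mul, eval_mul, eval_iter_deriv_zero 0 (fPoly n) n (n-1-i) hXdvd (by omega)]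
    ring
  have hS1 : S.eval 1 = 0 := by
    rw [hS, eval_finset_sum]
    apply Finset.sum_eq_zero
    intro i hi
    simp only [Finset.mem_range] at hi
    rcases Nat.eq_zero_or_pos i with rfl | hipos
    · simp only [Function.iterate_zero, id_eq]
      rw [eval_mul, eval_mul, hid1]
      ring
    · rw [eval_mul, eval_mul, eval_iter_deriv_zero 1 (fPoly n) (n-1) (n-1-i) hX1dvd (by omega)]
      ring
  -- pointwise identity for the integrand
  have hpt : ∀ t : ℝ, (q.eval t)^2 * (1 - t) * (Nat.factorial n : ℝ)
      = (derivative S).eval t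
        + (-1:ℝ)^n * ((derivative^[n] (idPoly n)).eval t * (fPoly n).eval t) := by
    intro t
    have h1 : (idPoly n).eval t = (1 - t) * q.eval t := by
      rw [hq]; simp
    have h2 : (Nat.factorial n : ℝ) * q.eval t = (rPoly n).eval t := by
      have := congrArg (fun p => Polynomial.eval t p) hqr
      simpa using this
    have h3 := congrArg (fun p => Polynomial.eval t p) htel
    simp only [eval_add, eval_mul, eval_C] at h3
    rw [← iter_deriv_fPoly n hn] at h2
    calc (q.eval t)^2 * (1 - t) * (Nat.factorial n : ℝ)
        = ((1 - t) * q.eval t) * ((Nat.factorial n : ℝ) * q.eval t) := by ring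
      _ = (idPoly n).eval t * (derivative^[n] (fPoly n)).eval t := by rw [h1, h2]
      _ = _ := h3
  -- integrate
  have hint1 : ∫ t in (0:ℝ)..1, (derivative S).eval t = 0 := by
    rw [polyFTC, hS0, hS1]; ring
  have hiter := iter_deriv_idPoly n hn
  have hconst : ∀ t : ℝ, (derivative^[n] (idPoly n)).eval t
      = fallFac (n:ℝ) n * fallFac (-(n:ℝ)) n / ((Nat.factorial n : ℝ))^2 * (Nat.factorial n) := by
    intro t; rw [hiter, eval_C]
  have hfev : ∀ t : ℝ, (fPoly n).eval t = t^n * (1-t)^(n-1) := by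
    intro t; unfold fPoly; simp
  -- compute the full integral
  have hI : ∫ t in (0:ℝ)..1, (q.eval t)^2 * (1 - t) * (Nat.factorial n : ℝ)
      = (-1:ℝ)^n * (fallFac (n:ℝ) n * fallFac (-(n:ℝ)) n / ((Nat.factorial n : ℝ))^2 * (Nat.factorial n))
        * ((Nat.factorial n * Nat.factorial (n-1) : ℝ) / (Nat.factorial (n + (n-1) + 1))) := by
    rw [intervalIntegral.integral_congr (fun t _ => hpt t)]
    rw [intervalIntegral.integral_add]
    · rw [hint1, zero_add]
      have : ∀ t : ℝ, (-1:ℝ)^n * ((derivative^[n] (idPoly n)).eval t * (fPoly n).eval t)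
          = ((-1:ℝ)^n * (fallFac (n:ℝ) n * fallFac (-(n:ℝ)) n / ((Nat.factorial n : ℝ))^2 * (Nat.factorial n)))
            * (t^n * (1-t)^(n-1)) := by
        intro t; rw [hconst, hfev]; ring
      rw [intervalIntegral.integral_congr (fun t _ => this t),
        intervalIntegral.integral_const_mul, betaInt]
    · exact ((derivative S).continuous_aeval).intervalIntegrable _ _
    · apply Continuous.intervalIntegrable
      exact continuous_const.mul
        (((derivative^[n] (idPoly n)).continuous_aeval).mul ((fPoly n).continuous_aeval))
  rw [intervalIntegral.integral_mul_const] at hI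
  have hIval : ∫ t in (0:ℝ)..1, (q.eval t)^2 * (1 - t)
      = (-1:ℝ)^n * (fallFac (n:ℝ) n * fallFac (-(n:ℝ)) n / ((Nat.factorial n : ℝ))^2 * (Nat.factorial n))
        * ((Nat.factorial n * Nat.factorial (n-1) : ℝ) / (Nat.factorial (n + (n-1) + 1))) / (Nat.factorial n) := by
    rw [eq_div_iff (ne_of_gt hfac)]
    exact hI
  rw [hIval, fallFac_nat_s7 n n (le_refl n), fallFac_neg n n hn, Nat.sub_self, Nat.factorial_zero]
  have h2n : n + (n-1) + 1 = 2*n := by omega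
  have h2n1 : n + n - 1 = 2*n - 1 := by omega
  rw [h2n, h2n1]
  have hfact2n : (Nat.factorial (2*n) : ℝ) = (2*n) * Nat.factorial (2*n-1) := by
    rw [show 2*n = (2*n-1)+1 by omega, Nat.factorial_succ]
    push_cast [Nat.cast_sub (by omega : 1 ≤ 2*n)]
    ring
  rw [hfact2n]
  have hp1 : (0:ℝ) < (Nat.factorial (2*n-1) : ℝ) := by positivity
  have hp2 : (0:ℝ) < (Nat.factorial (n-1) : ℝ) := by positivity
  have hp3 : (0:ℝ) < (n:ℝ) := by exact_mod_cast hn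
  rcases neg_one_pow_eq_or ℝ n with hpw | hpw <;> rw [hpw] <;> field_simp <;> ring
end
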